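/- Let w_1, …, w_d be nonzero vectors with w_i ∈ V_i, and for each i let v_i ∈ V_i be such that {w_i, v_i} is linearly independent. Then for any nonzero scalars λ_1, …, λ_d, the tensor T = λ_1 (v_1 ⊗ w_2 ⊗ ⋯ ⊗ w_d) + λ_2 (w_1 ⊗ v_2 ⊗ w_3 ⊗ ⋯ ⊗ w_d) + ⋯ + λ_d (w_1 ⊗ ⋯ ⊗ w_{d-1} ⊗ v_d) has tensor rank exactly d. -/

import Mathlib

open scoped TensorProduct
open PiTensorProduct

noncomputable def tensorRank {ι : Type*} [Fintype ι] {K : Type*} [Field K]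
    {V : ι → Type*} [∀ i, AddCommGroup (V i)] [∀ i, Module K (V i)]
    (T : ⨂[K] i, V i) : ℕ :=
  sInf {r | ∃ v : Fin r → Π i, V i, T = ∑ k, ⨂ₜ[K] i, v k i}

section aux
variable {K : Type*} [Field K]

lemma exists_dual_pair {W : Type*} [AddCommGroup W] [Module K W] {x y : W}
    (h : LinearIndependent K ![x, y]) (c0 c1 : K) :
    ∃ f : W →ₗ[K] K, f x = c0 ∧ f y = c1 := by
  let b : Module.Basis (Fin 2) K (Submodule.span K (Set.range ![x, y])) := Module.Basis.span h
  let f0 : (Submodule.span K (Set.range ![x, y])) →ₗ[K] K := b.constr K ![c0, c1]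
  obtain ⟨g, hg⟩ := LinearMap.exists_extend f0
  have key : ∀ i : Fin 2, g ((b i : W)) = ![c0, c1] i := by
    intro i
    have h2 : (g ∘ₗ (Submodule.span K (Set.range ![x, y])).subtype) (b i) = f0 (b i) := by rw [hg]
    simpa [f0, Module.Basis.constr_basis] using h2
  refine ⟨g, ?_, ?_⟩
  · have h0 := key 0
    rw [Module.Basis.span_apply] at h0
    simpa using h0
  · have h1 := key 1
    rw [Module.Basis.span_apply] at h1
    simpa using h1

lemma exists_dual_one {W : Type*} [AddCommGroup W] [Module K W] {x : W} (hx : x ≠ 0) :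
    ∃ f : W →ₗ[K] K, f x = 1 := by
  have : ¬ ∀ φ : Module.Dual K W, φ x = 0 := by
    rw [Module.forall_dual_apply_eq_zero_iff K]
    exact hx
  push_neg at this
  obtain ⟨φ, hφ⟩ := this
  exact ⟨(φ x)⁻¹ • φ, by simp [inv_mul_cancel₀ hφ]⟩

variable {ι : Type*} [Fintype ι] {V : ι → Type*} [∀ i, AddCommGroup (V i)] [∀ i, Module K (V i)]

lemma tprod_ne_zero (x : Π i, V i) (hx : ∀ i, x i ≠ 0) : (⨂ₜ[K] i, x i) ≠ 0 := by
  choose φ hφ using fun i => exists_dual_one (K := K) (hx i)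
  intro h
  have h2 := congrArg (PiTensorProduct.lift ((MultilinearMap.mkPiAlgebra K ι K).compLinearMap φ)) h
  simp [MultilinearMap.compLinearMap_apply, MultilinearMap.mkPiAlgebra_apply, hφ] at h2

set_option linter.unusedSectionVars false in
lemma map_update_tprod [DecidableEq ι] (i₀ : ι) (g : V i₀ →ₗ[K] V i₀) (x : Π i, V i) :
    PiTensorProduct.map (Function.update (fun i => (LinearMap.id : V i →ₗ[K] V i)) i₀ g)
      (⨂ₜ[K] i, x i) = ⨂ₜ[K] i, (Function.update x i₀ (g (x i₀))) i := by
  rw [PiTensorProduct.map_tprod]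
  congr 1
  funext j
  rcases eq_or_ne j i₀ with rfl | h
  · simp
  · simp [Function.update_of_ne h]

variable [DecidableEq ι]

lemma rank_lower (w : Π i, V i) (hw : ∀ i, w i ≠ 0) (S : Finset ι) :
    ∀ (v : Π i, V i) (lam : ι → K),
      (∀ i ∈ S, LinearIndependent K ![w i, v i]) → (∀ i ∈ S, lam i ≠ 0) →
      ∀ (r : ℕ) (a : Fin r → Π i, V i),
        ((∑ i ∈ S, lam i • ⨂ₜ[K] j, (Function.update w i (v i)) j) = ∑ k, ⨂ₜ[K] i, a k i) →
        S.card ≤ r := by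
  induction S using Finset.strongInduction with
  | _ S IH =>
  intro v lam hind hlam r a hT
  rcases S.eq_empty_or_nonempty with rfl | ⟨i₀, hi₀⟩
  · simp
  obtain ⟨f₁, hf₁w, hf₁v⟩ := exists_dual_pair (hind i₀ hi₀) 0 1
  -- some a k has nonzero "v"-component at i₀
  have hex : ∃ k, f₁ (a k i₀) ≠ 0 := by
    by_contra hc
    push_neg at hc
    have H := congrArg (PiTensorProduct.map
      (Function.update (fun i => (LinearMap.id : V i →ₗ[K] V i)) i₀ (f₁.smulRight (w i₀)))) hT
    simp only [map_sum, map_smul, map_update_tprod] at H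
    rw [← Finset.sum_erase_add S _ hi₀] at H
    have hz : ∀ i ∈ S.erase i₀,
        lam i • (⨂ₜ[K] j, (Function.update (Function.update w i (v i)) i₀
          ((f₁.smulRight (w i₀)) ((Function.update w i (v i)) i₀))) j) = 0 := by
      intro i hi
      have hne : i₀ ≠ i := fun h => (Finset.ne_of_mem_erase hi) h.symm
      rw [Function.update_of_ne hne]
      have : (f₁.smulRight (w i₀)) (w i₀) = 0 := by simp [hf₁w]
      rw [this, MultilinearMap.map_update_zero, smul_zero]
    rw [Finset.sum_congr rfl hz] at H
    simp only [Finset.sum_const_zero, zero_add] at H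
    rw [Function.update_self] at H
    have hgv : (f₁.smulRight (w i₀)) (v i₀) = w i₀ := by simp [hf₁v]
    rw [hgv, Function.update_idem, Function.update_eq_self] at H
    have hRz : ∀ k : Fin r, (⨂ₜ[K] j, (Function.update (a k) i₀
        ((f₁.smulRight (w i₀)) (a k i₀))) j) = 0 := by
      intro k
      have : (f₁.smulRight (w i₀)) (a k i₀) = 0 := by simp [hc k]
      rw [this, MultilinearMap.map_update_zero]
    rw [Fintype.sum_congr _ _ hRz] at H
    simp only [Finset.sum_const_zero] at H
    exact (smul_ne_zero (hlam i₀ hi₀) (tprod_ne_zero (K := K) w hw)) H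
  obtain ⟨k₀, hk₀⟩ := hex
  obtain ⟨r', rfl⟩ : ∃ r', r = r' + 1 :=
    ⟨r - 1, by rcases r with _ | r; exact k₀.elim0; simp⟩
  -- choose the substitution functional
  have hu : LinearIndependent K ![w i₀, a k₀ i₀] := by
    rw [LinearIndependent.pair_iff' (hw i₀)]
    intro c hc
    apply hk₀
    rw [← hc]
    simp [hf₁w]
  obtain ⟨f, hfw, hfu⟩ := exists_dual_pair hu 1 0
  set μ := f (v i₀) with hμ
  have H := congrArg (PiTensorProduct.map
    (Function.update (fun i => (LinearMap.id : V i →ₗ[K] V i)) i₀ (f.smulRight (w i₀)))) hT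
  simp only [map_sum, map_smul, map_update_tprod] at H
  rw [← Finset.sum_erase_add S _ hi₀] at H
  -- simplify LHS terms
  have hL : ∀ i ∈ S.erase i₀,
      lam i • (⨂ₜ[K] j, (Function.update (Function.update w i (v i)) i₀
        ((f.smulRight (w i₀)) ((Function.update w i (v i)) i₀))) j)
      = lam i • ⨂ₜ[K] j, (Function.update w i (v i)) j := by
    intro i hi
    have hne : i₀ ≠ i := fun h => (Finset.ne_of_mem_erase hi) h.symm
    rw [Function.update_of_ne hne]
    have hgw : (f.smulRight (w i₀)) (w i₀) = w i₀ := by simp [hfw]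
    rw [hgw]
    congr 1
    rw [show w i₀ = (Function.update w i (v i)) i₀ from (Function.update_of_ne hne _ _).symm,
      Function.update_eq_self]
  rw [Finset.sum_congr rfl hL] at H
  rw [Function.update_self] at H
  have hgv : (f.smulRight (w i₀)) (v i₀) = μ • w i₀ := by simp [hμ]
  rw [hgv, Function.update_idem, MultilinearMap.map_update_smul, Function.update_eq_self] at H
  -- simplify RHS terms and drop the k₀ term
  have hR : ∀ k : Fin (r' + 1), (⨂ₜ[K] j, (Function.update (a k) i₀
      ((f.smulRight (w i₀)) (a k i₀))) j)
      = f (a k i₀) • ⨂ₜ[K] j, (Function.update (a k) i₀ (w i₀)) j := by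
    intro k
    have : (f.smulRight (w i₀)) (a k i₀) = f (a k i₀) • w i₀ := by simp
    rw [this, MultilinearMap.map_update_smul]
  rw [Fintype.sum_congr _ _ hR, Fin.sum_univ_succAbove _ k₀, hfu, zero_smul, zero_add] at H
  -- now H : ∑ i ∈ S.erase i₀, lam i • X i + lam i₀ • μ • tprod w = ∑ m, f (a (succAbove m) i₀) • ...
  rcases (S.erase i₀).eq_empty_or_nonempty with he | ⟨i₁, hi₁⟩
  · have : S.card = 1 := by
      have := Finset.card_erase_add_one hi₀
      rw [he] at this
      simpa using this.symm
    omega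
  · have hi₁S : i₁ ∈ S := Finset.mem_of_mem_erase hi₁
    have hne10 : i₁ ≠ i₀ := Finset.ne_of_mem_erase hi₁
    set c := (lam i₀ * μ) / lam i₁ with hc
    set v' := Function.update v i₁ (v i₁ + c • w i₁) with hv'
    have key : (∑ i ∈ S.erase i₀, lam i • ⨂ₜ[K] j, (Function.update w i (v' i)) j)
        = ∑ i ∈ S.erase i₀, lam i • (⨂ₜ[K] j, (Function.update w i (v i)) j)
          + lam i₀ • μ • ⨂ₜ[K] j, w j := by
      rw [← Finset.sum_erase_add _ _ hi₁, ← Finset.sum_erase_add _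
        (fun i => lam i • ⨂ₜ[K] j, (Function.update w i (v i)) j) hi₁]
      have hrest : ∀ i ∈ (S.erase i₀).erase i₁,
          lam i • (⨂ₜ[K] j, (Function.update w i (v' i)) j)
          = lam i • ⨂ₜ[K] j, (Function.update w i (v i)) j := by
        intro i hi
        rw [hv', Function.update_of_ne (Finset.ne_of_mem_erase hi)]
      rw [Finset.sum_congr rfl hrest]
      have hv'i₁ : v' i₁ = v i₁ + c • w i₁ := by rw [hv', Function.update_self]
      rw [hv'i₁, MultilinearMap.map_update_add, MultilinearMap.map_update_smul,
        Function.update_eq_self]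
      rw [smul_add, smul_smul, hc, mul_div_cancel₀ _ (hlam i₁ hi₁S)]
      rw [smul_smul]
      abel
    rw [← key] at H
    -- build the shorter decomposition
    have hT' : (∑ i ∈ S.erase i₀, lam i • ⨂ₜ[K] j, (Function.update w i (v' i)) j)
        = ∑ m : Fin r', ⨂ₜ[K] j,
            (Function.update (a (k₀.succAbove m)) i₀ (f (a (k₀.succAbove m) i₀) • w i₀)) j := by
      rw [H]
      refine Finset.sum_congr rfl fun m _ => ?_
      rw [MultilinearMap.map_update_smul]
    have hind' : ∀ i ∈ S.erase i₀, LinearIndependent K ![w i, v' i] := by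
      intro i hi
      rcases eq_or_ne i i₁ with rfl | hne
      · rw [hv', Function.update_self, LinearIndependent.pair_iff' (hw i)]
        intro d hd
        have h2 : (d - c) • w i = v i := by
          rw [sub_smul, hd]
          abel
        exact (LinearIndependent.pair_iff' (hw i)).mp (hind i hi₁S) (d - c) h2
      · rw [hv', Function.update_of_ne hne]
        exact hind i (Finset.mem_of_mem_erase hi)
    have hcard := IH (S.erase i₀) (Finset.erase_ssubset hi₀) v' lam hind'
      (fun i hi => hlam i (Finset.mem_of_mem_erase hi)) r' _ hT'
    have := Finset.card_erase_add_one hi₀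
    omega

end aux

/-- the general tangent vector to the Segre variety at
[w₁ ⊗ ⋯ ⊗ w_d] has tensor rank exactly d. -/
theorem stmt2 {ι K : Type*} [Fintype ι] [DecidableEq ι] [Field K] [IsAlgClosed K] [CharZero K]
    {V : ι → Type*} [∀ i, AddCommGroup (V i)] [∀ i, Module K (V i)]
    [∀ i, FiniteDimensional K (V i)]
    (w v : Π i, V i) (hw : ∀ i, w i ≠ 0)
    (hind : ∀ i, LinearIndependent K ![w i, v i])
    (lam : ι → K) (hlam : ∀ i, lam i ≠ 0) :
    tensorRank (∑ i, lam i • ⨂ₜ[K] j, (if j = i then v j else w j)) = Fintype.card ι := by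
  have hfam : ∀ i : ι, (⨂ₜ[K] j, (if j = i then v j else w j))
      = ⨂ₜ[K] j, (Function.update w i (v i)) j := by
    intro i
    congr 1
    funext j
    rcases eq_or_ne j i with rfl | h
    · simp
    · simp [h, Function.update_of_ne h]
  simp only [hfam]
  set e : Fin (Fintype.card ι) ≃ ι := (Fintype.equivFin ι).symm with he
  have hdec : (∑ i, lam i • ⨂ₜ[K] j, (Function.update w i (v i)) j)
      = ∑ k : Fin (Fintype.card ι), ⨂ₜ[K] j,
          (Function.update w (e k) (lam (e k) • v (e k))) j := by
    calc (∑ i, lam i • ⨂ₜ[K] j, (Function.update w i (v i)) j)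
        = ∑ k : Fin (Fintype.card ι), lam (e k) • ⨂ₜ[K] j, (Function.update w (e k) (v (e k))) j :=
          (Fintype.sum_equiv e _ _ (fun k => rfl)).symm
      _ = ∑ k : Fin (Fintype.card ι), ⨂ₜ[K] j, (Function.update w (e k) (lam (e k) • v (e k))) j :=
          Finset.sum_congr rfl (fun k _ => (MultilinearMap.map_update_smul _ _ _ _ _).symm)
  apply le_antisymm
  · exact Nat.sInf_le ⟨fun k => Function.update w (e k) (lam (e k) • v (e k)), hdec⟩
  · refine le_csInf ⟨Fintype.card ι,
      fun k => Function.update w (e k) (lam (e k) • v (e k)), hdec⟩ ?_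
    rintro r ⟨a, ha⟩
    have := rank_lower w hw Finset.univ v lam (fun i _ => hind i) (fun i _ => hlam i) r a ha
    simpa [Finset.card_univ] using this
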